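/- Let n ≥ 1, d ≥ 1, let A be a symmetric (n+1)×(n+1) real matrix, let Z^(1), …, Z^(n) be d×d Hermitian complex matrices, and set Z^(n+1) := Id − Σ_{k=1}^n Z^(k). For 1 ≤ p ≤ n and 1 ≤ q ≤ n+1 define Γ_A(Z^(p)_{ij}, Z^(q)_{kl}) := δ_{pq} Σ_{s=1}^{n+1} A_{sp}(Z^(s)_{il} Z^(p)_{kj} + Z^(s)_{kj} Z^(p)_{il}) − A_{pq}(Z^(q)_{il} Z^(p)_{kj} + Z^(p)_{il} Z^(q)_{kj}). Then for every q with Z^(q) invertible and all 1 ≤ i,j ≤ d: Σ_{k,l=1}^d ((Z^(q))^{-1})_{lk} · Γ_A(Z^(p)_{ij}, Z^(q)_{kl}) = 2 δ_{pq} Σ_{s=1}^{n+1} A_{sp} Z^(s)_{ij} − 2 A_{pq} Z^(p)_{ij}. In particular for q = n+1 the left-hand side equals −2 A_{p,n+1} Z^(p)_{ij}. -/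

import Mathlib

open Finset Matrix

/-- The tuple `(Z^(1),…,Z^(n))` extended by `Z^(n+1) = Id - Σ Z^(k)`. -/
noncomputable def W10 {n d : ℕ} (Z : Fin n → Matrix (Fin d) (Fin d) ℂ) :
    Fin (n + 1) → Matrix (Fin d) (Fin d) ℂ :=
  Fin.snoc Z (1 - ∑ k, Z k)

/-- The co-metric `Γ_A(Z^(p)_{ij}, Z^(q)_{kl})` of the first matrix Dirichlet model, for
`1 ≤ p ≤ n` and `1 ≤ q ≤ n+1`. -/
noncomputable def Gamma10 {n d : ℕ} (A : Fin (n + 1) → Fin (n + 1) → ℝ)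
    (Z : Fin n → Matrix (Fin d) (Fin d) ℂ)
    (p : Fin n) (q : Fin (n + 1)) (i j k l : Fin d) : ℂ :=
  (if p.castSucc = q then
    ∑ s : Fin (n + 1), (A s p.castSucc : ℂ) *
      (W10 Z s i l * W10 Z p.castSucc k j + W10 Z s k j * W10 Z p.castSucc i l)
  else 0)
  - (A p.castSucc q : ℂ) * (W10 Z q i l * W10 Z p.castSucc k j
      + W10 Z p.castSucc i l * W10 Z q k j)

/-- The boundary-equation contraction for the first matrix Dirichlet model:
`Σ_{k,l} ((Z^(q))⁻¹)_{lk} Γ_A(Z^(p)_{ij}, Z^(q)_{kl})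
   = 2 δ_{pq} Σ_s A_{sp} Z^(s)_{ij} - 2 A_{pq} Z^(p)_{ij}`. -/
theorem stmt_10 (n d : ℕ) (hn : 1 ≤ n) (hd : 1 ≤ d)
    (A : Fin (n + 1) → Fin (n + 1) → ℝ)
    (hsymm : ∀ p q, A p q = A q p)
    (Z : Fin n → Matrix (Fin d) (Fin d) ℂ)
    (hherm : ∀ k, (Z k).IsHermitian)
    (p : Fin n) (q : Fin (n + 1))
    (hq : IsUnit (W10 Z q))
    (i j : Fin d) :
    ∑ k : Fin d, ∑ l : Fin d, (W10 Z q)⁻¹ l k * Gamma10 A Z p q i j k l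
      = 2 * (if p.castSucc = q then
              ∑ s : Fin (n + 1), (A s p.castSucc : ℂ) * W10 Z s i j
            else 0)
        - 2 * (A p.castSucc q : ℂ) * W10 Z p.castSucc i j := by
  classical
  set M := W10 Z q with hMdef
  have hdet : IsUnit M.det := (Matrix.isUnit_iff_isUnit_det _).mp hq
  have hMr : M * M⁻¹ = 1 := Matrix.mul_nonsing_inv _ hdet
  have hMl : M⁻¹ * M = 1 := Matrix.nonsing_inv_mul _ hdet
  have key : ∀ X Y : Matrix (Fin d) (Fin d) ℂ,
      (∑ k : Fin d, ∑ l : Fin d, M⁻¹ l k * (X i l * Y k j)) = (X * M⁻¹ * Y) i j := by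
    intro X Y
    simp only [Matrix.mul_apply, Finset.sum_mul]
    exact Finset.sum_congr rfl fun k _ => Finset.sum_congr rfl fun l _ => by ring
  have hg : ∀ X : Matrix (Fin d) (Fin d) ℂ,
      (∑ k : Fin d, ∑ l : Fin d,
          M⁻¹ l k * (X i l * W10 Z p.castSucc k j + X k j * W10 Z p.castSucc i l))
        = (X * M⁻¹ * W10 Z p.castSucc) i j + (W10 Z p.castSucc * M⁻¹ * X) i j := by
    intro X
    rw [← key X (W10 Z p.castSucc), ← key (W10 Z p.castSucc) X, ← Finset.sum_add_distrib]
    refine Finset.sum_congr rfl fun k _ => ?_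
    rw [← Finset.sum_add_distrib]
    exact Finset.sum_congr rfl fun l _ => by ring
  have expand : (∑ k : Fin d, ∑ l : Fin d, M⁻¹ l k * Gamma10 A Z p q i j k l)
      = (if p.castSucc = q then
          ∑ s : Fin (n + 1), (A s p.castSucc : ℂ) *
            (∑ k : Fin d, ∑ l : Fin d,
              M⁻¹ l k * (W10 Z s i l * W10 Z p.castSucc k j
                + W10 Z s k j * W10 Z p.castSucc i l))
         else 0)
        - (A p.castSucc q : ℂ) *
            (∑ k : Fin d, ∑ l : Fin d,
              M⁻¹ l k * (W10 Z q i l * W10 Z p.castSucc k j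
                + W10 Z q k j * W10 Z p.castSucc i l)) := by
    by_cases hpq : p.castSucc = q
    · simp only [Gamma10, if_pos hpq, Finset.mul_sum, mul_sub, Finset.sum_sub_distrib]
      congr 1
      · have swap3 : ∀ (f : Fin d → Fin d → Fin (n + 1) → ℂ),
            ∑ k : Fin d, ∑ l : Fin d, ∑ s, f k l s
              = ∑ s, ∑ k : Fin d, ∑ l : Fin d, f k l s := by
          intro f
          calc ∑ k : Fin d, ∑ l : Fin d, ∑ s, f k l s
              = ∑ k : Fin d, ∑ s, ∑ l : Fin d, f k l s :=
                Finset.sum_congr rfl fun k _ => Finset.sum_comm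
            _ = ∑ s, ∑ k : Fin d, ∑ l : Fin d, f k l s := Finset.sum_comm
        rw [swap3]
        exact Finset.sum_congr rfl fun s _ => Finset.sum_congr rfl fun k _ =>
          Finset.sum_congr rfl fun l _ => by ring
      · refine Finset.sum_congr rfl fun k _ => Finset.sum_congr rfl fun l _ => by ring
    · simp only [Gamma10, if_neg hpq, zero_sub, mul_neg, Finset.sum_neg_distrib,
        neg_inj, Finset.mul_sum]
      refine Finset.sum_congr rfl fun k _ => Finset.sum_congr rfl fun l _ => by ring
  rw [expand]
  have e1 : ∀ X : Matrix (Fin d) (Fin d) ℂ, X * M⁻¹ * M = X := fun X => by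
    rw [Matrix.mul_assoc, hMl, Matrix.mul_one]
  have e2 : ∀ X : Matrix (Fin d) (Fin d) ℂ, M * M⁻¹ * X = X := fun X => by
    rw [hMr, Matrix.one_mul]
  by_cases hpq : p.castSucc = q
  · subst hpq
    rw [← hMdef] at hg ⊢
    simp only [if_pos rfl, hg, e1, e2, if_true]
    rw [Finset.mul_sum]
    congr 1
    · exact Finset.sum_congr rfl fun s _ => by ring
    · ring
  · simp only [if_neg hpq, ← hMdef, hg, e1, e2]
    ring
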